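/- If 0 < u_1 ≤ u_2 ≤ ... ≤ u_K and τ_j = (Σ_{k=1}^j u_k² + σ²)/(Σ_{k=1}^j u_k) for j ≥ 1, then the value of F(c) = (Σ c_k)²/(Σ c_k² + σ²) at the capped point c_k = min(u_k, τ_j) equals Δ'·(Σ_{k≤j} u_k + (K−j)τ_j)²/(Σ_{k≤j} u_k² + (K−j)τ_j² + σ²) and, when τ_j ∈ (u_j, u_{j+1}], this point satisfies the first-order stationarity condition of F restricted to that segment. -/

import Mathlib

open Finset

/-- With sorted `0 < u 1 ≤ … ≤ u K` and
`τⱼ = (∑_{k≤j} u k² + σ²)/(∑_{k≤j} u k)`, the value of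
`F c = Δ'(∑ c k)²/(∑ c k² + σ²)` at the capped point `c k = min (u k) τⱼ` equals
`Δ'(U₁ + (K−j)τⱼ)²/(U₂ + (K−j)τⱼ² + σ²)`, and when `τⱼ ∈ (u j, u (j+1)]` this
point satisfies the first-order stationarity condition of the segment-restricted
objective. -/
theorem capped_point_value_and_stationarity
    (K j : ℕ) (hj1 : 1 ≤ j) (hjK : j < K)
    (u : ℕ → ℝ) (hu : ∀ k, 0 < u k) (hmono : Monotone u)
    (Δ' σ2 : ℝ) (hΔ : 0 < Δ') (hσ2 : 0 < σ2)
    (U₁ U₂ τj : ℝ)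
    (hU₁ : U₁ = ∑ k ∈ Icc 1 j, u k) (hU₂ : U₂ = ∑ k ∈ Icc 1 j, (u k) ^ 2)
    (hτj : τj = (U₂ + σ2) / U₁)
    (hseg : u j < τj ∧ τj ≤ u (j + 1)) :
    Δ' * (∑ k ∈ Icc 1 K, min (u k) τj) ^ 2 /
        (∑ k ∈ Icc 1 K, (min (u k) τj) ^ 2 + σ2) =
      Δ' * (U₁ + ((K : ℝ) - j) * τj) ^ 2 /
        (U₂ + ((K : ℝ) - j) * τj ^ 2 + σ2) ∧
    deriv (fun τ : ℝ => Δ' * (U₁ + ((K : ℝ) - j) * τ) ^ 2 /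
        (U₂ + ((K : ℝ) - j) * τ ^ 2 + σ2)) τj = 0 := by
  obtain ⟨hlow, hhigh⟩ := hseg
  have hjK' : j ≤ K := le_of_lt hjK
  set m : ℝ := (K : ℝ) - j with hm
  have hm0 : 0 ≤ m := by
    rw [hm]; have : (j : ℝ) ≤ (K : ℝ) := by exact_mod_cast hjK'
    linarith
  have hsplit : Icc 1 K = Icc 1 j ∪ Ioc j K := by
    ext x; simp only [mem_Icc, mem_union, mem_Ioc]; omega
  have hdisj : Disjoint (Icc 1 j) (Ioc j K) := by
    apply Finset.disjoint_left.mpr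
    intro a ha hb
    simp only [mem_Icc, mem_Ioc] at ha hb
    omega
  have hmin1 : ∀ k ∈ Icc 1 j, min (u k) τj = u k := by
    intro k hk
    simp only [mem_Icc] at hk
    exact min_eq_left (le_of_lt (lt_of_le_of_lt (hmono hk.2) hlow))
  have hmin2 : ∀ k ∈ Ioc j K, min (u k) τj = τj := by
    intro k hk
    simp only [mem_Ioc] at hk
    exact min_eq_right (le_trans hhigh (hmono (by omega : j + 1 ≤ k)))
  have hcard : ((Ioc j K).card : ℝ) = m := by
    rw [Nat.card_Ioc, hm, Nat.cast_sub hjK']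
  have hsum1 : ∑ k ∈ Icc 1 K, min (u k) τj = U₁ + m * τj := by
    rw [hsplit, Finset.sum_union hdisj, Finset.sum_congr rfl hmin1,
      Finset.sum_congr rfl hmin2, Finset.sum_const, nsmul_eq_mul, hcard, hU₁]
  have hsq1 : ∑ k ∈ Icc 1 j, (min (u k) τj) ^ 2 = ∑ k ∈ Icc 1 j, (u k) ^ 2 :=
    Finset.sum_congr rfl (fun k hk => by rw [hmin1 k hk])
  have hsq2 : ∑ k ∈ Ioc j K, (min (u k) τj) ^ 2 = ∑ k ∈ Ioc j K, τj ^ 2 :=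
    Finset.sum_congr rfl (fun k hk => by rw [hmin2 k hk])
  have hsum2 : ∑ k ∈ Icc 1 K, (min (u k) τj) ^ 2 = U₂ + m * τj ^ 2 := by
    rw [hsplit, Finset.sum_union hdisj, hsq1, hsq2,
      Finset.sum_const, nsmul_eq_mul, hcard, hU₂]
  have hU₁pos : 0 < U₁ := by
    rw [hU₁]
    exact Finset.sum_pos (fun k _ => hu k) ⟨1, by simp [hj1]⟩
  have hU₂nn : 0 ≤ U₂ := by
    rw [hU₂]; exact Finset.sum_nonneg fun k _ => sq_nonneg _
  have hden : U₂ + m * τj ^ 2 + σ2 ≠ 0 := by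
    have : 0 ≤ m * τj ^ 2 := mul_nonneg hm0 (sq_nonneg _)
    nlinarith
  constructor
  · rw [hsum1, hsum2]
  · have h1 : HasDerivAt (fun τ : ℝ => Δ' * (U₁ + m * τ) ^ 2)
        (Δ' * (2 * (U₁ + m * τj) ^ 1 * m)) τj := by
      have hb : HasDerivAt (fun τ : ℝ => U₁ + m * τ) m τj := by
        simpa using ((hasDerivAt_id τj).const_mul m).const_add U₁
      exact (hb.pow 2).const_mul Δ'
    have h2 : HasDerivAt (fun τ : ℝ => U₂ + m * τ ^ 2 + σ2)
        (m * (2 * τj ^ 1)) τj := by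
      have hb : HasDerivAt (fun τ : ℝ => τ ^ 2) (2 * τj ^ 1) τj := hasDerivAt_pow 2 τj
      exact ((hb.const_mul m).const_add U₂).add_const σ2
    have hD : deriv (fun τ : ℝ => Δ' * (U₁ + m * τ) ^ 2 / (U₂ + m * τ ^ 2 + σ2)) τj = _ :=
      (h1.div h2 hden).deriv
    rw [hD]
    have key : τj * U₁ = U₂ + σ2 := by
      rw [hτj]; field_simp
    apply div_eq_zero_iff.mpr
    left
    linear_combination (-(2 * m * Δ' * (U₁ + m * τj))) * key
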